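/- For every ω in the piecewise polynomial space V_h^k (with periodic trace identification) and every integer p ≥ 2, the conservative-flux nonlinear form vanishes on the diagonal: N^c(ω,ω) = 0. -/

import Mathlib

open Polynomial Set

noncomputable section

namespace FW

variable {N : ℕ}

/-- Minus trace `ω⁻` at interface `j+1/2` (right end of cell `j`). -/
def trM (x : Fin (N + 1) → ℝ) (ω : Fin N → Polynomial ℝ) (j : Fin N) : ℝ :=
  (ω j).eval (x j.succ)

/-- Plus trace `ω⁺` at interface `j+1/2` (left end of the next cell, cyclically). -/
def trP [NeZero N] (x : Fin (N + 1) → ℝ) (ω : Fin N → Polynomial ℝ) (j : Fin N) : ℝ :=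
  (ω (j + 1)).eval (x (j + 1).castSucc)

/-- Average trace `{ω}`. -/
def trA [NeZero N] (x : Fin (N + 1) → ℝ) (ω : Fin N → Polynomial ℝ) (j : Fin N) : ℝ :=
  (trP x ω j + trM x ω j) / 2

/-- Jump `[ω]`. -/
def jmp [NeZero N] (x : Fin (N + 1) → ℝ) (ω : Fin N → Polynomial ℝ) (j : Fin N) : ℝ :=
  trP x ω j - trM x ω j

/-- Cell L² pairing `(u, φ)_{I_j}` of a piecewise polynomial with a test polynomial. -/
def ipj (x : Fin (N + 1) → ℝ) (u : Fin N → Polynomial ℝ) (j : Fin N) (φ : Polynomial ℝ) : ℝ :=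
  ∫ t in (x j.castSucc)..(x j.succ), (u j).eval t * φ.eval t

/-- Cell pairing `(f∘u, φ)_{I_j}`. -/
def ipfj (x : Fin (N + 1) → ℝ) (f : ℝ → ℝ) (u : Fin N → Polynomial ℝ) (j : Fin N)
    (φ : Polynomial ℝ) : ℝ :=
  ∫ t in (x j.castSucc)..(x j.succ), f ((u j).eval t) * φ.eval t

/-- Boundary pairing `⟨g, φ⟩_{I_j}` for interface values `g`. -/
def bdj [NeZero N] (x : Fin (N + 1) → ℝ) (g : Fin N → ℝ) (j : Fin N) (φ : Polynomial ℝ) : ℝ :=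
  g j * φ.eval (x j.succ) - g (j - 1) * φ.eval (x j.castSucc)

/-- Membership in the space `V_h^k` of piecewise polynomials of degree at most `k`. -/
def memV (k : ℕ) (ω : Fin N → Polynomial ℝ) : Prop :=
  ∀ j, (ω j).degree ≤ (k : WithBot ℕ)

/-- `L⁻(ω, φ)`. -/
def Lm [NeZero N] (x : Fin (N + 1) → ℝ) (ω φ : Fin N → Polynomial ℝ) : ℝ :=
  ∑ j, (-(ipj x ω j (derivative (φ j))) + bdj x (trM x ω) j (φ j))

/-- `L⁺(ω, φ)`. -/
def Lp [NeZero N] (x : Fin (N + 1) → ℝ) (ω φ : Fin N → Polynomial ℝ) : ℝ :=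
  ∑ j, (-(ipj x ω j (derivative (φ j))) + bdj x (trP x ω) j (φ j))

/-- `L^c(ω, φ)`. -/
def Lc [NeZero N] (x : Fin (N + 1) → ℝ) (ω φ : Fin N → Polynomial ℝ) : ℝ :=
  ∑ j, (-(ipj x ω j (derivative (φ j))) + bdj x (trA x ω) j (φ j))

/-- Godunov numerical flux. -/
def godunov (f : ℝ → ℝ) (c d : ℝ) : ℝ :=
  if c < d then sInf (f '' Set.Icc c d) else sSup (f '' Set.Icc d c)

/-- Conservative numerical flux for `f(u) = u^p/p`, `F(u) = u^(p+1)/(p(p+1))`. -/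
def consFlux (p : ℕ) (c d : ℝ) : ℝ :=
  if c = d then c ^ p / (p : ℝ)
  else (d ^ (p + 1) / ((p : ℝ) * ((p : ℝ) + 1)) - c ^ (p + 1) / ((p : ℝ) * ((p : ℝ) + 1))) / (d - c)

/-- Dissipative (Godunov-flux) nonlinear form `N^d`. -/
def Nd [NeZero N] (x : Fin (N + 1) → ℝ) (f : ℝ → ℝ) (ω φ : Fin N → Polynomial ℝ) : ℝ :=
  ∑ j, (-(ipfj x f ω j (derivative (φ j)))
    + bdj x (fun i => godunov f (trM x ω i) (trP x ω i)) j (φ j))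

/-- Conservative-flux nonlinear form `N^c`. -/
def Nc [NeZero N] (x : Fin (N + 1) → ℝ) (p : ℕ) (ω φ : Fin N → Polynomial ℝ) : ℝ :=
  ∑ j, (-(ipfj x (fun w => w ^ p / (p : ℝ)) ω j (derivative (φ j)))
    + bdj x (fun i => consFlux p (trM x ω i) (trP x ω i)) j (φ j))

end FW

section Aux

open Polynomial FW

private lemma int_deriv_poly (Q : Polynomial ℝ) (l r : ℝ) :
    ∫ t in l..r, (derivative Q).eval t = Q.eval r - Q.eval l := by
  have h : ∀ t ∈ Set.uIcc l r, HasDerivAt (fun s => Q.eval s) ((derivative Q).eval t) t := by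
    intro t _
    simpa using Q.hasDerivAt t
  exact intervalIntegral.integral_eq_sub_of_hasDerivAt h
    ((Polynomial.continuous (derivative Q)).intervalIntegrable l r)

private lemma cell_int (q : Polynomial ℝ) (p : ℕ) (hp : 2 ≤ p) (l r : ℝ) :
    (∫ t in l..r, (q.eval t) ^ p / (p : ℝ) * (derivative q).eval t)
      = (q.eval r) ^ (p + 1) / ((p : ℝ) * ((p : ℝ) + 1))
        - (q.eval l) ^ (p + 1) / ((p : ℝ) * ((p : ℝ) + 1)) := by
  have hp0 : (p : ℝ) ≠ 0 := by positivity
  have hp1 : (p : ℝ) + 1 ≠ 0 := by positivity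
  set Q : Polynomial ℝ := Polynomial.C (((p : ℝ) * ((p : ℝ) + 1))⁻¹) * q ^ (p + 1) with hQ
  have hev : ∀ t, (q.eval t) ^ p / (p : ℝ) * (derivative q).eval t
      = (derivative Q).eval t := by
    intro t
    simp only [hQ, derivative_C_mul, Polynomial.derivative_pow, eval_mul, eval_C, eval_pow,
      eval_natCast, Nat.add_sub_cancel, Nat.cast_add, Nat.cast_one]
    field_simp
  rw [intervalIntegral.integral_congr (fun t _ => hev t), int_deriv_poly]
  simp only [hQ, eval_mul, eval_C, eval_pow]
  ring

private lemma flux_id (p : ℕ) (c d : ℝ) :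
    FW.consFlux p c d * c - c ^ (p + 1) / ((p : ℝ) * ((p : ℝ) + 1))
      = FW.consFlux p c d * d - d ^ (p + 1) / ((p : ℝ) * ((p : ℝ) + 1)) := by
  unfold FW.consFlux
  by_cases h : c = d
  · simp [h]
  · have hdc : d - c ≠ 0 := sub_ne_zero.mpr (Ne.symm h)
    simp only [if_neg h]
    field_simp
    ring

end Aux

theorem stmt6 {N : ℕ} [NeZero N] (hN : 1 ≤ N) (a b : ℝ) (hab : a < b)
    (x : Fin (N + 1) → ℝ) (hx : StrictMono x) (hxa : x 0 = a) (hxb : x (Fin.last N) = b)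
    (k : ℕ) (p : ℕ) (hp : 2 ≤ p)
    (ω : Fin N → Polynomial ℝ) (hω : FW.memV k ω) :
    FW.Nc x p ω ω = 0 := by
  classical
  set Fq : ℝ → ℝ := fun u => u ^ (p + 1) / ((p : ℝ) * ((p : ℝ) + 1)) with hFq
  set g : Fin N → ℝ := fun i => FW.consFlux p (FW.trM x ω i) (FW.trP x ω i) with hg
  set A : Fin N → ℝ := fun j => g j * FW.trM x ω j - Fq (FW.trM x ω j) with hA
  set B : Fin N → ℝ := fun j => g j * FW.trP x ω j - Fq (FW.trP x ω j) with hB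
  have hterm : ∀ j : Fin N,
      (-(FW.ipfj x (fun w => w ^ p / (p : ℝ)) ω j (derivative (ω j)))
        + FW.bdj x g j (ω j)) = A j - B (j - 1) := by
    intro j
    have hsub : (j - 1) + 1 = j := sub_add_cancel j 1
    have htrP : FW.trP x ω (j - 1) = (ω j).eval (x j.castSucc) := by
      rw [FW.trP, hsub]
    rw [FW.ipfj, cell_int (ω j) p hp, FW.bdj]
    simp only [hA, hB, hFq, FW.trM, htrP]
    ring
  rw [FW.Nc]
  calc (∑ j, (-(FW.ipfj x (fun w => w ^ p / (p : ℝ)) ω j (derivative (ω j)))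
        + FW.bdj x g j (ω j))) = ∑ j, (A j - B (j - 1)) := by
        exact Finset.sum_congr rfl (fun j _ => hterm j)
    _ = (∑ j, A j) - (∑ j, B (j - 1)) := Finset.sum_sub_distrib _ _
    _ = (∑ j, A j) - (∑ j, B j) := by
        congr 1
        exact Fintype.sum_equiv (Equiv.subRight (1 : Fin N)) _ _ (fun j => rfl)
    _ = 0 := by
        rw [← Finset.sum_sub_distrib]
        apply Finset.sum_eq_zero
        intro j _
        have := flux_id p (FW.trM x ω j) (FW.trP x ω j)
        simp only [hA, hB, hFq, hg]
        linarith [flux_id p (FW.trM x ω j) (FW.trP x ω j)]
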